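/- Let (f_n)_{n≥0} = 1, 1, 2, 3, 5, 8, 13, … be the Fibonacci numbers defined by f_0 = 1, f_1 = 1, and f_{n+1} = f_n + f_{n−1} for n ≥ 1. Then Σ_{n=0}^∞ (−1)^n / (f_n f_{n+1}) = (√5 − 1)/2, the reciprocal of the golden ratio φ = (1 + √5)/2. -/

import Mathlib

set_option maxHeartbeats 1000000


/-- For the Fibonacci numbers `f_0 = f_1 = 1`, `f_{n+1} = f_n + f_{n-1}`, the
alternating sum of reciprocal golden rectangle numbers equals `1/φ = (√5 - 1)/2`. -/
theorem stmt_10 (f : ℕ → ℕ) (hf0 : f 0 = 1) (hf1 : f 1 = 1)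
    (hf : ∀ n : ℕ, f (n + 2) = f (n + 1) + f n) :
    (∑' n : ℕ, (-1 : ℝ) ^ n / ((f n : ℝ) * (f (n + 1) : ℝ))) = (Real.sqrt 5 - 1) / 2 := by
  -- positivity of f
  have hpos : ∀ n, 1 ≤ f n := by
    intro n
    induction n using Nat.strong_induction_on with
    | _ n ih =>
      match n with
      | 0 => simp [hf0, hf1]
      | 1 => omega
      | (m+2) =>
        have h1 := ih (m+1) (by omega)
        have h2 := ih m (by omega)
        rw [hf]; omega
  have hposR : ∀ n, (0:ℝ) < f n := by
    intro n; exact_mod_cast Nat.lt_of_lt_of_le Nat.zero_lt_one (hpos n)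
  have hmono : ∀ n, f n ≤ f (n+1) := by
    intro n
    match n with
    | 0 => simp [hf0, hf1]
    | (m+1) => rw [hf]; have := hpos m; omega
  -- growth: 2^n ≤ f n * f (n+1)
  have hgrow : ∀ n, 2^n ≤ f n * f (n+1) := by
    intro n
    induction n with
    | zero => simp [hf0, hf1]
    | succ m ih =>
      have h1 := hmono m
      have h2 := hpos (m+1)
      calc 2^(m+1) = 2 * 2^m := by ring
        _ ≤ 2 * (f m * f (m+1)) := by omega
        _ ≤ f (m+1) * f (m+2) := by
            rw [hf]
            nlinarith
  set t : ℕ → ℝ := fun n => (-1:ℝ)^n / ((f n : ℝ) * (f (n+1) : ℝ)) with ht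
  -- summability
  have hsum : Summable t := by
    apply Summable.of_abs
    refine Summable.of_nonneg_of_le (fun n => abs_nonneg _) (fun n => ?_)
      (summable_geometric_of_lt_one (by norm_num) (by norm_num : (1/2:ℝ) < 1))
    · 
      have h1 : |t n| = 1 / ((f n : ℝ) * (f (n+1) : ℝ)) := by
        rw [ht]
        rw [abs_div, abs_pow, abs_neg, abs_one, one_pow]
        congr 1
        exact abs_of_pos (mul_pos (hposR n) (hposR (n+1)))
      rw [h1, one_div, div_pow, one_pow, one_div]
      apply inv_anti₀ (by positivity)
      exact_mod_cast hgrow n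
  -- Cassini identity over ℝ
  have cass : ∀ n, (f n : ℝ) * f (n+2) = (f (n+1):ℝ)^2 + (-1)^n := by
    intro n
    induction n with
    | zero => push_cast [hf 0, hf0, hf1]; norm_num
    | succ m ih =>
      have h1 : (f (m+2) : ℝ) = f (m+1) + f m := by exact_mod_cast hf m
      have h2 : (f (m+3) : ℝ) = f (m+2) + f (m+1) := by exact_mod_cast hf (m+1)
      have hpm : (-1:ℝ)^(m+1) = -(-1)^m := by ring
      rw [h2, hpm]
      nlinarith [ih, h1]
  -- partial sums
  have psum : ∀ n, (∑ i ∈ Finset.range (n+1), t i) = (f n : ℝ) / f (n+1) := by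
    intro n
    induction n with
    | zero => simp [ht, hf0, hf1]
    | succ m ih =>
      rw [Finset.sum_range_succ, ih]
      have h1 := hposR (m+1)
      have h2 := hposR (m+2)
      have hc := cass m
      have key : t (m+1) = (f (m+1):ℝ)/f (m+2) - (f m:ℝ)/f (m+1) := by
        show (-1:ℝ)^(m+1) / ((f (m+1):ℝ) * f (m+2)) = _
        have hp : (-1:ℝ)^(m+1) = -(-1)^m := by ring
        rw [hp]
        field_simp
        linear_combination hc
      rw [key]; ring
  set L : ℝ := ∑' n, t n with hL
  have hhs : HasSum t L := hsum.hasSum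
  have htend : Filter.Tendsto (fun n => ∑ i ∈ Finset.range n, t i) Filter.atTop (nhds L) :=
    hhs.tendsto_sum_nat
  have hr : Filter.Tendsto (fun n => (f n : ℝ) / f (n+1)) Filter.atTop (nhds L) := by
    have h := htend.comp (Filter.tendsto_add_atTop_nat 1)
    exact h.congr fun n => by simpa [Function.comp] using psum n
  -- L ≥ 0
  have hL0 : 0 ≤ L := ge_of_tendsto' hr (fun n => by positivity)
  -- recurrence for ratios
  have hrec : ∀ n, (f (n+1) : ℝ) / f (n+2) = 1 / (1 + (f n : ℝ) / f (n+1)) := by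
    intro n
    have h1 := hposR n
    have h2 := hposR (n+1)
    have h3 := hposR (n+2)
    have hc : (f (n+2) : ℝ) = f (n+1) + f n := by exact_mod_cast hf n
    rw [hc]
    field_simp
  have hr1 : Filter.Tendsto (fun n => (f (n+1) : ℝ) / f (n+2)) Filter.atTop (nhds L) :=
    hr.comp (Filter.tendsto_add_atTop_nat 1)
  have hr2 : Filter.Tendsto (fun n => 1 / (1 + (f n : ℝ) / f (n+1))) Filter.atTop
      (nhds (1 / (1 + L))) := by
    apply Filter.Tendsto.div tendsto_const_nhds (Filter.Tendsto.const_add 1 hr)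
    intro h
    have : L = -1 := by linarith [eq_neg_of_add_eq_zero_right h]
    linarith
  have hkey : L = 1 / (1 + L) := by
    apply tendsto_nhds_unique hr1
    exact hr2.congr (fun n => (hrec n).symm)
  -- solve for L
  have hLe : L * (1 + L) = 1 := by
    have h : (1:ℝ) + L ≠ 0 := by positivity
    field_simp at hkey
    linarith [hkey]
  have hs5 : Real.sqrt 5 ^ 2 = 5 := Real.sq_sqrt (by norm_num)
  have hs5' : 0 ≤ Real.sqrt 5 := Real.sqrt_nonneg 5
  show L = (Real.sqrt 5 - 1) / 2
  nlinarith [sq_nonneg (2*L + 1 - Real.sqrt 5), sq_nonneg (2*L + 1 + Real.sqrt 5)]
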